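/- Let T be a bounded linear operator on a Banach space X such that ‖Tⁿ‖ ≤ K·pⁿ for all n, where K ≥ 1 and p ∈ (0,1). Then T has the positive shadowing property: for every ε > 0 there exists δ > 0 such that every δ-pseudotrajectory (f_n)_{n≥0} of T satisfies ‖Tⁿ f_0 − f_n‖ ≤ ε for all n ∈ ℕ. -/

import Mathlib

theorem power_bounded_positive_shadowing
    {X : Type*} [NormedAddCommGroup X] [NormedSpace ℂ X] [CompleteSpace X]
    (T : X →L[ℂ] X) (K p : ℝ) (hK : 1 ≤ K) (hp0 : 0 < p) (hp1 : p < 1)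
    (hT : ∀ n : ℕ, ‖T ^ n‖ ≤ K * p ^ n) :
    ∀ ε > (0 : ℝ), ∃ δ > (0 : ℝ), ∀ f : ℕ → X,
      (∀ n : ℕ, ‖T (f n) - f (n + 1)‖ ≤ δ) →
      ∀ n : ℕ, ‖(T ^ n) (f 0) - f n‖ ≤ ε := by
  intro ε hε
  have h1p : 0 < 1 - p := by linarith
  have hK0 : 0 < K := by linarith
  refine ⟨ε * (1 - p) / K, by positivity, ?_⟩
  intro f hf n
  set δ := ε * (1 - p) / K with hδ
  -- identity
  have key : ∀ n : ℕ, (T ^ n) (f 0) - f n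
      = ∑ k ∈ Finset.range n, (T ^ (n - 1 - k)) (T (f k) - f (k + 1)) := by
    intro n
    induction n with
    | zero => simp
    | succ m ih =>
      rw [Finset.sum_range_succ]
      have : ∀ k ∈ Finset.range m, (T ^ (m + 1 - 1 - k)) (T (f k) - f (k + 1))
          = T ((T ^ (m - 1 - k)) (T (f k) - f (k + 1))) := by
        intro k hk
        have hk' : k < m := Finset.mem_range.mp hk
        have : m + 1 - 1 - k = (m - 1 - k) + 1 := by omega
        rw [this, pow_succ']
        rfl
      rw [Finset.sum_congr rfl this, ← map_sum, ← ih]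
      have : (T ^ (m + 1)) (f 0) = T ((T ^ m) (f 0)) := by
        rw [pow_succ']; rfl
      rw [this]
      simp [Nat.succ_sub_one]
  rw [key n]
  calc ‖∑ k ∈ Finset.range n, (T ^ (n - 1 - k)) (T (f k) - f (k + 1))‖
      ≤ ∑ k ∈ Finset.range n, K * p ^ (n - 1 - k) * δ := by
        refine norm_sum_le_of_le _ ?_
        intro k hk
        calc ‖(T ^ (n - 1 - k)) (T (f k) - f (k + 1))‖
            ≤ ‖T ^ (n - 1 - k)‖ * ‖T (f k) - f (k + 1)‖ :=
              ContinuousLinearMap.le_opNorm _ _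
          _ ≤ K * p ^ (n - 1 - k) * δ := by
              apply mul_le_mul (hT _) (hf k) (norm_nonneg _)
              positivity
    _ ≤ ∑ k ∈ Finset.range n, K * p ^ k * δ := by
        rw [← Finset.sum_range_reflect]
        apply Finset.sum_le_sum
        intro k hk
        have hk' : k < n := Finset.mem_range.mp hk
        have : n - 1 - (n - 1 - k) = k := by omega
        rw [this]
    _ = K * δ * ∑ k ∈ Finset.range n, p ^ k := by
        rw [Finset.mul_sum]; congr 1; ext k; ring
    _ ≤ K * δ * (1 / (1 - p)) := by
        apply mul_le_mul_of_nonneg_left _ (by positivity)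
        have heq : (p ^ n - 1) / (p - 1) = (1 - p ^ n) / (1 - p) := by
          rw [← neg_sub 1 (p ^ n), ← neg_sub 1 p, neg_div_neg_eq]
        rw [geom_sum_eq hp1.ne, heq]
        gcongr
        nlinarith [pow_pos hp0 n]
    _ = ε := by rw [hδ]; field_simp
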